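/- arXiv:1602.08488 — 3 statements merged into one kernel-verified Lean document; each statement's English description precedes it below -/
import Mathlib

section
/- For every v ∈ ℝ^6, the sequence A^n·v converges, as n → ∞, to the constant vector whose every entry is (1/6)·(sum of entries of v). -/
open Matrix

/-- The 6×6 cube stealing matrix: faces 0..5 with opposite pairs (0,5),(1,3),(2,4);
entry is 1/4 for adjacent faces, 0 for equal or opposite faces. -/
noncomputable def cubeA : Matrix (Fin 6) (Fin 6) ℝ :=
  !![0, 1/4, 1/4, 1/4, 1/4, 0;
     1/4, 0, 1/4, 0, 1/4, 1/4;
     1/4, 1/4, 0, 1/4, 0, 1/4;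
     1/4, 0, 1/4, 0, 1/4, 1/4;
     1/4, 1/4, 0, 1/4, 0, 1/4;
     0, 1/4, 1/4, 1/4, 1/4, 0]

lemma cons_val_five {α : Type*} {n : ℕ} (a : α) (u : Fin n.succ.succ.succ.succ.succ → α) :
    Matrix.vecCons a u 5 = Matrix.vecHead (Matrix.vecTail (Matrix.vecTail (Matrix.vecTail (Matrix.vecTail u)))) := rfl

set_option maxHeartbeats 1000000

noncomputable def cubeP : Matrix (Fin 6) (Fin 6) ℝ := Matrix.of fun _ _ => 1/6

noncomputable def cubeQ : Matrix (Fin 6) (Fin 6) ℝ :=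
  (4/3 : ℝ) • (cubeA * cubeA - cubeA)

lemma cubeA_sq : cubeA * cubeA =
    !![1/4, 1/8, 1/8, 1/8, 1/8, 1/4;
       1/8, 1/4, 1/8, 1/4, 1/8, 1/8;
       1/8, 1/8, 1/4, 1/8, 1/4, 1/8;
       1/8, 1/4, 1/8, 1/4, 1/8, 1/8;
       1/8, 1/8, 1/4, 1/8, 1/4, 1/8;
       1/4, 1/8, 1/8, 1/8, 1/8, 1/4] := by
  ext i j
  fin_cases i <;> fin_cases j <;>
    simp [cubeA, Matrix.mul_apply, Fin.sum_univ_six, cons_val_five, Matrix.vecHead, Matrix.vecTail, Function.comp] <;> norm_num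

lemma cubeA_cube : cubeA * (cubeA * cubeA) =
    (1/2 : ℝ) • (cubeA * cubeA) + (1/2 : ℝ) • cubeA := by
  rw [cubeA_sq]
  ext i j
  fin_cases i <;> fin_cases j <;>
    simp [cubeA, Matrix.mul_apply, Fin.sum_univ_six, cons_val_five, Matrix.vecHead, Matrix.vecTail, Function.comp] <;> norm_num

lemma cubeA_mul_P : cubeA * cubeP = cubeP := by
  ext i j
  fin_cases i <;>
    simp [cubeA, cubeP, Matrix.mul_apply, Fin.sum_univ_six, cons_val_five, Matrix.vecHead, Matrix.vecTail, Function.comp] <;> norm_num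

lemma cubeP_mul_A : cubeP * cubeA = cubeP := by
  ext i j
  fin_cases j <;>
    simp [cubeA, cubeP, Matrix.mul_apply, Fin.sum_univ_six, cons_val_five, Matrix.vecHead, Matrix.vecTail, Function.comp] <;> norm_num

lemma cubeQ_mul_A : cubeQ * cubeA = (-(1/2) : ℝ) • cubeQ := by
  unfold cubeQ
  rw [Matrix.smul_mul, Matrix.sub_mul, Matrix.mul_assoc, ← Matrix.mul_assoc cubeA cubeA cubeA,
    Matrix.mul_assoc, cubeA_cube]
  ext i j
  simp [Matrix.smul_apply, Matrix.sub_apply, Matrix.add_apply]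
  ring

lemma cubeA_decomp : cubeA = cubeP + (-(1/2) : ℝ) • cubeQ := by
  have h : (2:ℝ) • (cubeA * cubeA) + cubeA = (3:ℝ) • cubeP := by
    rw [cubeA_sq]
    ext i j
    fin_cases i <;> fin_cases j <;>
      simp [cubeA, cubeP, cons_val_five, Matrix.vecHead, Matrix.vecTail, Function.comp] <;> norm_num
  unfold cubeQ
  ext i j
  have := congrFun (congrFun h i) j
  simp [Matrix.smul_apply, Matrix.sub_apply, Matrix.add_apply] at this ⊢
  linarith

lemma cubeA_pow (n : ℕ) (hn : 1 ≤ n) :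
    cubeA ^ n = cubeP + ((-(1/2) : ℝ) ^ n) • cubeQ := by
  induction n with
  | zero => omega
  | succ n ih =>
    rcases Nat.eq_or_lt_of_le hn with h | h
    · simp only [← h, pow_one]
      exact cubeA_decomp
    · have hn' : 1 ≤ n := by omega
      rw [pow_succ, ih hn', Matrix.add_mul, cubeP_mul_A, Matrix.smul_mul, cubeQ_mul_A,
        smul_smul, pow_succ]
      try ring_nf

/-- The iterates A^n·v converge to the constant vector with every entry (1/6)·∑ v i. -/
theorem stmt_7 (v : Fin 6 → ℝ) :
    Filter.Tendsto (fun n : ℕ => (cubeA ^ n) *ᵥ v) Filter.atTop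
      (nhds (fun _ => (1/6) * ∑ i, v i)) := by
  have hPv : cubeP *ᵥ v = (fun _ => (1/6) * ∑ i, v i) := by
    funext j
    simp [cubeP, Matrix.mulVec, dotProduct, Finset.mul_sum]
  have key : ∀ n : ℕ, 1 ≤ n →
      (cubeA ^ n) *ᵥ v = (fun _ => (1/6) * ∑ i, v i) + ((-(1/2):ℝ) ^ n) • (cubeQ *ᵥ v) := by
    intro n hn
    rw [cubeA_pow n hn, Matrix.add_mulVec, Matrix.smul_mulVec, hPv]
  have hlim : Filter.Tendsto (fun n : ℕ => ((-(1/2):ℝ) ^ n)) Filter.atTop (nhds 0) := by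
    apply tendsto_pow_atTop_nhds_zero_of_abs_lt_one
    rw [abs_neg, abs_of_nonneg] <;> norm_num
  have hlim2 : Filter.Tendsto
      (fun n : ℕ => (fun _ => (1/6) * ∑ i, v i) + ((-(1/2):ℝ) ^ n) • (cubeQ *ᵥ v))
      Filter.atTop (nhds (fun _ => (1/6) * ∑ i, v i)) := by
    have h := hlim.smul_const (cubeQ *ᵥ v)
    rw [zero_smul] at h
    simpa using Filter.Tendsto.const_add (fun _ => (1/6) * ∑ i, v i) h
  exact Filter.Tendsto.congr'
    (Filter.eventually_atTop.mpr ⟨1, fun n hn => (key n hn).symm⟩) hlim2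
end

section
/- The set of eigenvalues of the cube stealing matrix A is exactly {1, -1/2, 0}, with 0 having geometric multiplicity 3, -1/2 having geometric multiplicity 2, and 1 having geometric multiplicity 1. -/
open Matrix

open Module Submodule

private lemma cv2 (a b c d e f : ℝ) : ![a,b,c,d,e,f] 2 = c := rfl
private lemma cv3 (a b c d e f : ℝ) : ![a,b,c,d,e,f] 3 = d := rfl
private lemma cv4 (a b c d e f : ℝ) : ![a,b,c,d,e,f] 4 = e := rfl
private lemma cv5 (a b c d e f : ℝ) : ![a,b,c,d,e,f] 5 = f := rfl

noncomputable abbrev cubeE (μ : ℝ) : Submodule ℝ (Fin 6 → ℝ) :=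
  Module.End.eigenspace cubeA.mulVecLin μ

lemma mem_cubeE_iff {μ : ℝ} {x : Fin 6 → ℝ} : x ∈ cubeE μ ↔ cubeA.mulVec x = μ • x := by
  rw [Module.End.mem_eigenspace_iff, Matrix.mulVecLin_apply]

lemma cube_lb {μ : ℝ} {n : ℕ} {v : Fin n → (Fin 6 → ℝ)}
    (hv : ∀ i, v i ∈ cubeE μ) (hind : LinearIndependent ℝ v) :
    n ≤ finrank ℝ (cubeE μ) := by
  have hw : LinearIndependent ℝ (fun i => (⟨v i, hv i⟩ : cubeE μ)) := by
    apply LinearIndependent.of_comp (cubeE μ).subtype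
    exact hind
  simpa using hw.fintype_card_le_finrank

lemma cube_mem0 : ∀ i : Fin 3,
    (![![(1:ℝ),0,0,0,0,-1], ![0,1,0,-1,0,0], ![0,0,1,0,-1,0]] i) ∈ cubeE 0 := by
  intro i
  rw [mem_cubeE_iff]
  fin_cases i <;> (funext j; fin_cases j <;>
    norm_num [cubeA, Matrix.mulVec, dotProduct, Fin.sum_univ_six, cv2, cv3, cv4, cv5])

lemma cube_ind0 : LinearIndependent ℝ
    (![![(1:ℝ),0,0,0,0,-1], ![0,1,0,-1,0,0], ![0,0,1,0,-1,0]]) := by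
  rw [Fintype.linearIndependent_iff]
  intro g hg
  have h0 := congrFun hg 0
  have h1 := congrFun hg 1
  have h2 := congrFun hg 2
  simp [Fin.sum_univ_three] at h0 h1 h2
  intro i; fin_cases i <;> simp_all

lemma cube_memb : ∀ i : Fin 2,
    (![![(2:ℝ),-1,-1,-1,-1,2], ![0,1,-1,1,-1,0]] i) ∈ cubeE (-(1/2)) := by
  intro i
  rw [mem_cubeE_iff]
  fin_cases i <;> (funext j; fin_cases j <;>
    norm_num [cubeA, Matrix.mulVec, dotProduct, Fin.sum_univ_six, cv2, cv3, cv4, cv5])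

lemma cube_indb : LinearIndependent ℝ (![![(2:ℝ),-1,-1,-1,-1,2], ![0,1,-1,1,-1,0]]) := by
  rw [Fintype.linearIndependent_iff]
  intro g hg
  have h0 := congrFun hg 0
  have h1 := congrFun hg 1
  simp [Fin.sum_univ_two] at h0 h1
  intro i; fin_cases i <;> simp_all

lemma cube_mem1 : ∀ i : Fin 1, (![![(1:ℝ),1,1,1,1,1]] i) ∈ cubeE 1 := by
  intro i
  rw [mem_cubeE_iff]
  fin_cases i
  funext j; fin_cases j <;>
    norm_num [cubeA, Matrix.mulVec, dotProduct, Fin.sum_univ_six, cv2, cv3, cv4, cv5]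

lemma cube_ind1 : LinearIndependent ℝ (![![(1:ℝ),1,1,1,1,1]]) := by
  rw [Fintype.linearIndependent_iff]
  intro g hg
  have h0 := congrFun hg 0
  simp [Fin.sum_univ_one] at h0
  intro i; fin_cases i; simp_all

lemma cube_disj {a : ℝ} {s : Submodule ℝ (Fin 6 → ℝ)}
    (hs : s ≤ ⨆ j, ⨆ _ : j ≠ a, cubeE j) : Disjoint (cubeE a) s :=
  ((Module.End.eigenspaces_iSupIndep cubeA.mulVecLin) a).mono_right hs

lemma cube_le {a b : ℝ} (hab : b ≠ a) : cubeE b ≤ ⨆ j, ⨆ _ : j ≠ a, cubeE j :=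
  le_iSup_of_le b (le_iSup_of_le hab le_rfl)

lemma cube_sum4 {a b c d : ℝ} (hba : b ≠ a) (hca : c ≠ a) (hda : d ≠ a)
    (hcb : c ≠ b) (hdb : d ≠ b) (hdc : d ≠ c) :
    finrank ℝ (cubeE a) + finrank ℝ (cubeE b) + finrank ℝ (cubeE c)
      + finrank ℝ (cubeE d) ≤ 6 := by
  have dab : Disjoint (cubeE a) (cubeE b) := cube_disj (cube_le hba)
  have dabc : Disjoint (cubeE c) (cubeE a ⊔ cubeE b) :=
    cube_disj (sup_le (cube_le hca.symm) (cube_le hcb.symm))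
  have dabcd : Disjoint (cubeE d) (cubeE a ⊔ cubeE b ⊔ cubeE c) :=
    cube_disj (sup_le (sup_le (cube_le hda.symm) (cube_le hdb.symm)) (cube_le hdc.symm))
  have h1 : finrank ℝ ↥(cubeE a ⊔ cubeE b) = finrank ℝ (cubeE a) + finrank ℝ (cubeE b) := by
    have := Submodule.finrank_sup_add_finrank_inf_eq (cubeE a) (cubeE b)
    rw [dab.eq_bot, finrank_bot] at this; omega
  have h2 : finrank ℝ ↥(cubeE a ⊔ cubeE b ⊔ cubeE c)
      = finrank ℝ ↥(cubeE a ⊔ cubeE b) + finrank ℝ (cubeE c) := by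
    have := Submodule.finrank_sup_add_finrank_inf_eq (cubeE a ⊔ cubeE b) (cubeE c)
    rw [inf_comm, dabc.eq_bot, finrank_bot] at this; omega
  have h3 := Submodule.finrank_add_finrank_le_of_disjoint dabcd.symm
  have htop : finrank ℝ (Fin 6 → ℝ) = 6 := by simp
  omega

lemma cube_lb0 : 3 ≤ finrank ℝ (cubeE 0) := cube_lb cube_mem0 cube_ind0
lemma cube_lbb : 2 ≤ finrank ℝ (cubeE (-(1/2))) := cube_lb cube_memb cube_indb
lemma cube_lb1 : 1 ≤ finrank ℝ (cubeE 1) := cube_lb cube_mem1 cube_ind1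

lemma cube_sum3 :
    finrank ℝ (cubeE 1) + finrank ℝ (cubeE (-(1/2))) + finrank ℝ (cubeE 0) ≤ 6 := by
  have dab : Disjoint (cubeE 1) (cubeE (-(1/2))) := cube_disj (cube_le (by norm_num))
  have dabc : Disjoint (cubeE 0) (cubeE 1 ⊔ cubeE (-(1/2))) :=
    cube_disj (sup_le (cube_le (by norm_num)) (cube_le (by norm_num)))
  have h1 := Submodule.finrank_sup_add_finrank_inf_eq (cubeE 1) (cubeE (-(1/2)))
  rw [dab.eq_bot, finrank_bot] at h1
  have h3 := Submodule.finrank_add_finrank_le_of_disjoint dabc.symm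
  have htop : finrank ℝ (Fin 6 → ℝ) = 6 := by simp
  omega

/-- The eigenvalues of A are exactly 1, -1/2, 0, with geometric multiplicities
1, 2, 3 respectively. -/
theorem stmt_10 :
    (∀ μ : ℝ, Module.End.HasEigenvalue cubeA.mulVecLin μ ↔ (μ = 1 ∨ μ = -(1/2) ∨ μ = 0)) ∧
    Module.finrank ℝ (Module.End.eigenspace cubeA.mulVecLin 0) = 3 ∧
    Module.finrank ℝ (Module.End.eigenspace cubeA.mulVecLin (-(1/2))) = 2 ∧
    Module.finrank ℝ (Module.End.eigenspace cubeA.mulVecLin 1) = 1 := by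
  have l0 := cube_lb0
  have lb := cube_lbb
  have l1 := cube_lb1
  have s3 := cube_sum3
  refine ⟨fun μ => ⟨fun hμ => ?_, fun hμ => ?_⟩,
    (show finrank ℝ (cubeE 0) = 3 by omega),
    (show finrank ℝ (cubeE (-(1/2))) = 2 by omega),
    (show finrank ℝ (cubeE 1) = 1 by omega)⟩
  · by_contra hc
    push_neg at hc
    obtain ⟨h1, hb, h0⟩ := hc
    have hpos : 1 ≤ finrank ℝ (cubeE μ) := by
      rw [Module.End.hasEigenvalue_iff] at hμ
      have : Nontrivial (cubeE μ) := Submodule.nontrivial_iff_ne_bot.mpr hμ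
      exact Module.finrank_pos
    have := cube_sum4 (a := 1) (b := -(1/2)) (c := 0) (d := μ)
      (by norm_num) (by norm_num) h1 (by norm_num) hb h0
    omega
  · rw [Module.End.hasEigenvalue_iff]
    rcases hμ with rfl | rfl | rfl
    · exact Submodule.ne_bot_iff _ |>.mpr ⟨![1,1,1,1,1,1], cube_mem1 0, by
        intro h; have := congrFun h 0; simp at this⟩
    · exact Submodule.ne_bot_iff _ |>.mpr ⟨![2,-1,-1,-1,-1,2], cube_memb 0, by
        intro h; have := congrFun h 0; simp at this⟩
    · exact Submodule.ne_bot_iff _ |>.mpr ⟨![1,0,0,0,0,-1], cube_mem0 0, by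
        intro h; have := congrFun h 0; simp at this⟩
end

section
/- For n even, if v ∈ ℝ^n, then the subsequences B^{2m}·v and B^{2m+1}·v each converge as m → ∞, and their limits are constant on even indices and constant on odd indices. -/
open Matrix

/-- The n-gon stealing matrix over ℝ: B(i,j) = 1/2 if j = i±1 (mod n), 0 otherwise. -/
noncomputable def ngonBR (n : ℕ) [NeZero n] : Matrix (ZMod n) (ZMod n) ℝ :=
  Matrix.of fun i j => if j = i + 1 ∨ j = i - 1 then (1/2 : ℝ) else 0

section Aux
variable (n : ℕ) [NeZero n]

lemma ngon_two_ne_zero (hn : 4 ≤ n) : (2 : ZMod n) ≠ 0 := by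
  have h1 : ((2:ℕ) : ZMod n) ≠ 0 := by
    rw [Ne, ZMod.natCast_eq_zero_iff]
    intro h
    have := Nat.le_of_dvd (by norm_num) h
    omega
  simpa using h1

lemma ngonBR_mulVec (hn : 4 ≤ n) (w : ZMod n → ℝ) (i : ZMod n) :
    (ngonBR n *ᵥ w) i = (w (i+1) + w (i-1))/2 := by
  have hne : i + 1 ≠ i - 1 := by
    intro h
    exact ngon_two_ne_zero n hn (by linear_combination h)
  have key : ∀ j : ZMod n, (ngonBR n) i j * w j
      = (if j = i+1 then w j / 2 else 0) + (if j = i-1 then w j / 2 else 0) := by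
    intro j
    by_cases h1 : j = i + 1 <;> by_cases h2 : j = i - 1
    · exact absurd (h1.symm.trans h2) hne
    · rw [if_pos h1, if_neg h2, show (ngonBR n) i j = 1/2 from by simp [ngonBR, h1]]; ring
    · rw [if_neg h1, if_pos h2, show (ngonBR n) i j = 1/2 from by simp [ngonBR, h2]]; ring
    · rw [if_neg h1, if_neg h2, show (ngonBR n) i j = 0 from by simp [ngonBR, h1, h2]]; ring
  simp only [mulVec, dotProduct, key, Finset.sum_add_distrib, Finset.sum_ite_eq',
    Finset.mem_univ, if_true]
  ring

lemma ngon_natCast_val_eq (i : ZMod n) : ((i.val : ℕ) : ZMod n) = i := by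
  simp [ZMod.natCast_val, ZMod.cast_id]

lemma ngon_harmonic_const (x : ZMod n → ℝ)
    (hx : ∀ i, x (i+1) + x (i-1) = 2 * x i) : ∀ i j : ZMod n, x i = x j := by
  set d : ZMod n → ℝ := fun i => x (i+1) - x i with hd
  have hstep : ∀ i, d (i+1) = d i := by
    intro i
    have := hx (i+1)
    simp only [hd]
    have h3 : i + 1 - 1 = i := by ring
    rw [h3] at this
    linarith
  have hdk : ∀ k : ℕ, d (k : ZMod n) = d 0 := by
    intro k
    induction k with
    | zero => simp
    | succ m ih => push_cast; rw [hstep]; push_cast at ih; exact ih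
  have hdall : ∀ i : ZMod n, d i = d 0 := fun i => by
    rw [← ngon_natCast_val_eq n i]; exact hdk i.val
  have hxk : ∀ k : ℕ, x (k : ZMod n) = x 0 + k * d 0 := by
    intro k
    induction k with
    | zero => simp
    | succ m ih =>
      have : x ((m:ZMod n) + 1) = x (m : ZMod n) + d (m : ZMod n) := by
        simp [hd]
      push_cast
      rw [this, hdall, ih]
      ring
  have hn0 : x ((n : ZMod n)) = x 0 + n * d 0 := hxk n
  rw [ZMod.natCast_self] at hn0
  have hnpos : (0:ℝ) < n := by
    exact_mod_cast Nat.pos_of_ne_zero (NeZero.ne n)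
  have hd0 : d 0 = 0 := by
    have : (n:ℝ) * d 0 = 0 := by linarith
    rcases mul_eq_zero.mp this with h | h
    · linarith
    · exact h
  intro i j
  rw [← ngon_natCast_val_eq n i, ← ngon_natCast_val_eq n j, hxk, hxk, hd0]
  ring

lemma ngon_paritySucc (hn : 4 ≤ n) (heven : Even n) (i : ZMod n) :
    (i+1).val % 2 = (i.val + 1) % 2 := by
  have h1 : (1 : ZMod n).val = 1 := ZMod.val_one'' (by omega)
  rw [ZMod.val_add, h1, Nat.mod_mod_of_dvd _ (even_iff_two_dvd.mp heven)]

lemma ngon_parityPred (hn : 4 ≤ n) (heven : Even n) (i : ZMod n) :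
    (i-1).val % 2 = (i.val + 1) % 2 := by
  have := ngon_paritySucc n hn heven (i-1)
  rw [sub_add_cancel] at this
  omega

lemma ngon_parity_const (hn : 4 ≤ n) (heven : Even n) (w u : ZMod n → ℝ)
    (hwu : ngonBR n *ᵥ w = u) (huw : ngonBR n *ᵥ u = w) :
    ∀ i j : ZMod n, i.val % 2 = j.val % 2 → w i = w j := by
  have key : ∀ (a b : ZMod n → ℝ), ngonBR n *ᵥ a = b → ngonBR n *ᵥ b = a →
      ∀ i j : ZMod n, i.val % 2 = 0 → j.val % 2 = 0 → a i = a j := by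
    intro a b hab hba
    set x : ZMod n → ℝ := fun i => if i.val % 2 = 0 then a i else b i with hxdef
    have hx : ∀ i, x (i+1) + x (i-1) = 2 * x i := by
      intro i
      have hs := ngon_paritySucc n hn heven i
      have hp := ngon_parityPred n hn heven i
      by_cases h : i.val % 2 = 0
      · have h1 : (i+1).val % 2 ≠ 0 := by omega
        have h2 : (i-1).val % 2 ≠ 0 := by omega
        simp only [hxdef, if_pos h, if_neg h1, if_neg h2]
        have := ngonBR_mulVec n hn b i
        rw [hba] at this
        linarith
      · have h1 : (i+1).val % 2 = 0 := by omega
        have h2 : (i-1).val % 2 = 0 := by omega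
        simp only [hxdef, if_neg h, if_pos h1, if_pos h2]
        have := ngonBR_mulVec n hn a i
        rw [hab] at this
        linarith
    intro i j hi hj
    have := ngon_harmonic_const n x hx i j
    simpa [hxdef, if_pos hi, if_pos hj] using this
  intro i j hij
  by_cases h : i.val % 2 = 0
  · exact key w u hwu huw i j h (by omega)
  · have hi1 : i.val % 2 = 1 := by omega
    have hj1 : j.val % 2 = 1 := by omega
    set x : ZMod n → ℝ := fun i => if i.val % 2 = 0 then u i else w i with hxdef
    have hx : ∀ i, x (i+1) + x (i-1) = 2 * x i := by
      intro i
      have hs := ngon_paritySucc n hn heven i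
      have hp := ngon_parityPred n hn heven i
      by_cases h : i.val % 2 = 0
      · have h1 : (i+1).val % 2 ≠ 0 := by omega
        have h2 : (i-1).val % 2 ≠ 0 := by omega
        simp only [hxdef, if_pos h, if_neg h1, if_neg h2]
        have := ngonBR_mulVec n hn w i
        rw [hwu] at this
        linarith
      · have h1 : (i+1).val % 2 = 0 := by omega
        have h2 : (i-1).val % 2 = 0 := by omega
        simp only [hxdef, if_neg h, if_pos h1, if_pos h2]
        have := ngonBR_mulVec n hn u i
        rw [huw] at this
        linarith
    have := ngon_harmonic_const n x hx i j
    have hj0 : ¬ j.val % 2 = 0 := by omega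
    simpa [hxdef, h, hj0] using this

lemma ngonBR_isHermitian : (ngonBR n).IsHermitian := by
  ext i j
  simp only [conjTranspose_apply, ngonBR, of_apply, star_trivial]
  have : (i = j + 1 ∨ i = j - 1) ↔ (j = i + 1 ∨ j = i - 1) := by
    constructor
    · rintro (h | h)
      · right; rw [h]; ring
      · left; rw [h]; ring
    · rintro (h | h)
      · right; rw [h]; ring
      · left; rw [h]; ring
  rw [if_congr this rfl rfl]

lemma ngon_eig_sq_le_one (hn : 4 ≤ n) (k : ZMod n) :
    ((ngonBR_isHermitian n).eigenvalues k)^2 ≤ 1 := by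
  set hA := ngonBR_isHermitian n
  set lam := hA.eigenvalues k with hlam
  set x : ZMod n → ℝ := ⇑(hA.eigenvectorBasis k) with hxdef
  have heig : ngonBR n *ᵥ x = lam • x := hA.mulVec_eigenvectorBasis k
  have hxne : ∃ i, x i ≠ 0 := by
    by_contra h
    push_neg at h
    have : hA.eigenvectorBasis k = 0 := by
      ext i
      exact h i
    exact hA.eigenvectorBasis.orthonormal.ne_zero k this
  obtain ⟨i₀, hi₀⟩ := Finset.exists_max_image Finset.univ (fun i => |x i|)
    ⟨hxne.choose, Finset.mem_univ _⟩
  obtain ⟨-, hmax⟩ := hi₀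
  have hpos : 0 < |x i₀| := by
    obtain ⟨i, hi⟩ := hxne
    calc 0 < |x i| := abs_pos.mpr hi
    _ ≤ |x i₀| := hmax i (Finset.mem_univ _)
  have h1 : lam * x i₀ = (x (i₀+1) + x (i₀-1))/2 := by
    have := ngonBR_mulVec n hn x i₀
    rw [heig] at this
    simpa using this
  have h2 : |lam| * |x i₀| ≤ |x i₀| := by
    rw [← abs_mul, h1]
    have ha := hmax (i₀+1) (Finset.mem_univ _)
    have hb := hmax (i₀-1) (Finset.mem_univ _)
    calc |(x (i₀+1) + x (i₀-1))/2| ≤ (|x (i₀+1)| + |x (i₀-1)|)/2 := by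
          rw [abs_div]
          simp only [abs_two]
          gcongr
          exact abs_add_le _ _
    _ ≤ |x i₀| := by linarith
  have hle : |lam| ≤ 1 := by
    by_contra h
    push_neg at h
    nlinarith
  calc lam^2 = |lam|^2 := (sq_abs lam).symm
  _ ≤ 1 := by nlinarith [abs_nonneg lam]

lemma ngon_exists_spectral (hn : 4 ≤ n) :
    ∃ (U : Matrix (ZMod n) (ZMod n) ℝ) (lam : ZMod n → ℝ),
      (∀ k, lam k ^ 2 ≤ 1) ∧ (star U * U = 1) ∧
      (∀ N : ℕ, (ngonBR n)^N = U * diagonal (fun k => lam k ^ N) * star U) := by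
  have hA := ngonBR_isHermitian n
  refine ⟨(hA.eigenvectorUnitary : Matrix (ZMod n) (ZMod n) ℝ), hA.eigenvalues,
    fun k => ngon_eig_sq_le_one n hn k, (Matrix.mem_unitaryGroup_iff').mp hA.eigenvectorUnitary.2,
    ?_⟩
  have hUs : (hA.eigenvectorUnitary : Matrix (ZMod n) (ZMod n) ℝ) *
      star (hA.eigenvectorUnitary : Matrix (ZMod n) (ZMod n) ℝ) = 1 :=
    (Matrix.mem_unitaryGroup_iff).mp hA.eigenvectorUnitary.2
  have hsU : star (hA.eigenvectorUnitary : Matrix (ZMod n) (ZMod n) ℝ) *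
      (hA.eigenvectorUnitary : Matrix (ZMod n) (ZMod n) ℝ) = 1 :=
    (Matrix.mem_unitaryGroup_iff').mp hA.eigenvectorUnitary.2
  have hspec : ngonBR n = (hA.eigenvectorUnitary : Matrix (ZMod n) (ZMod n) ℝ) *
      diagonal hA.eigenvalues * star (hA.eigenvectorUnitary : Matrix (ZMod n) (ZMod n) ℝ) := by
    have := hA.spectral_theorem
    rw [Unitary.conjStarAlgAut_apply, RCLike.ofReal_real_eq_id, Function.id_comp] at this
    exact this
  generalize hg : (hA.eigenvectorUnitary : Matrix (ZMod n) (ZMod n) ℝ) = U at hUs hsU hspec ⊢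
  generalize hg2 : hA.eigenvalues = lam at hspec ⊢
  intro N
  induction N with
  | zero =>
    simp only [pow_zero]
    have h1 : (diagonal fun _ : ZMod n => (1:ℝ)) = (1 : Matrix (ZMod n) (ZMod n) ℝ) :=
      diagonal_one
    rw [h1, mul_one, hUs]
  | succ N ih =>
    have hdiag : (diagonal fun k => lam k ^ (N+1)) =
        diagonal (fun k => lam k ^ N) * diagonal lam := by
      rw [diagonal_mul_diagonal]
      exact congrArg _ (funext fun k => pow_succ _ _)
    have hgen : ∀ (D1 D2 : Matrix (ZMod n) (ZMod n) ℝ),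
        U * D1 * star U * (U * D2 * star U) = U * (D1 * D2) * star U := by
      intro D1 D2
      have h : U * D1 * star U * (U * D2 * star U)
          = U * D1 * (star U * U) * (D2 * star U) := by noncomm_ring
      rw [h, hsU, mul_one]
      noncomm_ring
    rw [pow_succ, ih]
    conv_lhs => rw [hspec]
    rw [hgen, ← hdiag]

end Aux

/-- For even n, the even and odd subsequences of B^m·v each converge, and each limit is
constant on even indices and constant on odd indices. -/
theorem stmt_17 (n : ℕ) [NeZero n] (hn : 4 ≤ n) (heven : Even n) (v : ZMod n → ℝ) :
    ∃ L₀ L₁ : ZMod n → ℝ,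
      Filter.Tendsto (fun m : ℕ => ((ngonBR n) ^ (2 * m)) *ᵥ v) Filter.atTop (nhds L₀) ∧
      Filter.Tendsto (fun m : ℕ => ((ngonBR n) ^ (2 * m + 1)) *ᵥ v) Filter.atTop (nhds L₁) ∧
      (∀ i j : ZMod n, i.val % 2 = j.val % 2 → L₀ i = L₀ j) ∧
      (∀ i j : ZMod n, i.val % 2 = j.val % 2 → L₁ i = L₁ j) := by
  obtain ⟨U, lam, hle, hsU, hpow⟩ := ngon_exists_spectral n hn
  set c : ZMod n → ℝ := fun k => if lam k ^ 2 = 1 then 1 else 0 with hc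
  set P : Matrix (ZMod n) (ZMod n) ℝ := U * diagonal c * star U with hP
  set L₀ : ZMod n → ℝ := P *ᵥ v with hL₀
  set L₁ : ZMod n → ℝ := ngonBR n *ᵥ L₀ with hL₁
  -- entry formula
  have hentry : ∀ (d : ZMod n → ℝ) (i j : ZMod n),
      (U * diagonal d * star U) i j = ∑ k, U i k * d k * star U k j := by
    intro d i j
    rw [mul_apply]
    exact Finset.sum_congr rfl fun k _ => by rw [mul_diagonal]
  -- scalar limits
  have hck : ∀ k, Filter.Tendsto (fun m : ℕ => (lam k ^ 2)^m) Filter.atTop (nhds (c k)) := by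
    intro k
    by_cases h : lam k ^ 2 = 1
    · simp only [hc, if_pos h, h, one_pow]
      exact tendsto_const_nhds
    · simp only [hc, if_neg h]
      apply tendsto_pow_atTop_nhds_zero_of_lt_one (sq_nonneg _)
      exact lt_of_le_of_ne (hle k) h
  -- entrywise matrix convergence
  have hent : ∀ i j : ZMod n,
      Filter.Tendsto (fun m : ℕ => ((ngonBR n)^(2*m)) i j) Filter.atTop (nhds (P i j)) := by
    intro i j
    have hfun : ∀ m : ℕ, ((ngonBR n)^(2*m)) i j = ∑ k, U i k * (lam k ^ 2)^m * star U k j := by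
      intro m
      rw [hpow (2*m), hentry]
      exact Finset.sum_congr rfl fun k _ => by rw [pow_mul]
    simp only [hfun, hP, hentry]
    apply tendsto_finset_sum
    intro k _
    exact ((hck k).const_mul (U i k)).mul_const (star U k j)
  -- convergence of the even subsequence
  have htend₀ : Filter.Tendsto (fun m : ℕ => ((ngonBR n) ^ (2 * m)) *ᵥ v)
      Filter.atTop (nhds L₀) := by
    rw [tendsto_pi_nhds]
    intro i
    have hfun : ∀ m : ℕ, (((ngonBR n)^(2*m)) *ᵥ v) i = ∑ j, ((ngonBR n)^(2*m)) i j * v j :=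
      fun m => rfl
    simp only [hfun]
    have hLi : L₀ i = ∑ j, P i j * v j := rfl
    rw [hLi]
    exact tendsto_finset_sum _ fun j _ => (hent i j).mul_const (v j)
  -- convergence of the odd subsequence
  have htend₁ : Filter.Tendsto (fun m : ℕ => ((ngonBR n) ^ (2 * m + 1)) *ᵥ v)
      Filter.atTop (nhds L₁) := by
    have hfun : ∀ m : ℕ, ((ngonBR n)^(2*m+1)) *ᵥ v = ngonBR n *ᵥ (((ngonBR n)^(2*m)) *ᵥ v) := by
      intro m
      rw [mulVec_mulVec, ← pow_succ']
    simp only [hfun]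
    rw [tendsto_pi_nhds]
    intro i
    have hform : ∀ w : ZMod n → ℝ, (ngonBR n *ᵥ w) i = ∑ j, ngonBR n i j * w j := fun w => rfl
    simp only [hform]
    apply tendsto_finset_sum
    intro j _
    exact (Filter.Tendsto.const_mul _ ((tendsto_pi_nhds.mp htend₀) j))
  -- fixed point property
  have hA2P : ngonBR n ^ 2 * P = P := by
    rw [hpow 2, hP]
    have h : U * diagonal (fun k => lam k ^ 2) * star U * (U * diagonal c * star U)
        = U * diagonal (fun k => lam k ^ 2) * (star U * U) * (diagonal c * star U) := by
      noncomm_ring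
    have h2 : (diagonal fun k => lam k ^ 2) * diagonal c = diagonal c := by
      rw [diagonal_mul_diagonal]
      refine congrArg _ (funext fun k => ?_)
      simp only [hc]
      by_cases hk : lam k ^ 2 = 1
      · rw [if_pos hk, hk]; ring
      · rw [if_neg hk]; ring
    have h3 : U * (diagonal fun k => lam k ^ 2) * (diagonal c * star U)
        = U * ((diagonal fun k => lam k ^ 2) * diagonal c) * star U := by noncomm_ring
    rw [h, hsU, mul_one, h3, h2]
  have hfix₀ : ngonBR n *ᵥ L₁ = L₀ := by
    rw [hL₁, hL₀, mulVec_mulVec, mulVec_mulVec, ← pow_two, hA2P]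
  have hfix₁ : ngonBR n *ᵥ L₀ = L₁ := rfl
  refine ⟨L₀, L₁, htend₀, htend₁, ?_, ?_⟩
  · exact ngon_parity_const n hn heven L₀ L₁ hfix₁ hfix₀
  · exact ngon_parity_const n hn heven L₁ L₀ hfix₀ hfix₁
end
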